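/- Let q : Aut(𝒢₂) → GL(H) be the homomorphism induced by the action of automorphisms on the abelianization 𝒢₂/[𝒢₂, 𝒢₂] ≅ H, let Inn(𝒢₂) ⊆ Aut(𝒢₂) be the group of inner automorphisms, and let Out(𝒢₂) = Aut(𝒢₂)/Inn(𝒢₂). Let SpOut(𝒢₂) ⊆ Out(𝒢₂) be the image of q⁻¹(Sp(H)), and let N ⊆ Hom_R(H, Λ²H) be the submodule consisting of the maps f_b : a ↦ a∧b for b ∈ H (N is stable under the GL(H)-action (A·f)(u) = Λ²A(f(A⁻¹u))). Then, under the isomorphism Aut(𝒢₂) ≅ Hom_R(H, Λ²H) ⋊ GL(H) given by (f, A) ↦ ((ξ, u) ↦ (2·f(Au) + Λ²A(ξ), Au)), the inner automorphism group Inn(𝒢₂) corresponds to N × {id_H}, and SpOut(𝒢₂) is isomorphic to the semidirect product (Hom_R(H, Λ²H)/N) ⋊ Sp(H). -/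

import Mathlib

namespace Paper

open ExteriorAlgebra

open scoped TensorProduct

variable {R : Type*} [CommRing R] {H : Type*} [AddCommGroup H] [Module R H]

theorem wedge_mem (v w : H) : ι R v * ι R w ∈ ⋀[R]^2 H := by
  rw [show (⋀[R]^2 H) = LinearMap.range (ι R (M := H)) * LinearMap.range (ι R (M := H)) from
    sq _]
  exact Submodule.mul_mem_mul (LinearMap.mem_range_self _ v) (LinearMap.mem_range_self _ w)

/-- The wedge product `H × H → Λ²H` as a bilinear map. -/
noncomputable def wedge : H →ₗ[R] H →ₗ[R] ↥(⋀[R]^2 H) :=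
  LinearMap.mk₂ R (fun v w => ⟨ι R v * ι R w, wedge_mem v w⟩)
    (fun v v' w => Subtype.ext (by simp [add_mul]))
    (fun c v w => Subtype.ext (by simp [smul_mul_assoc]))
    (fun v w w' => Subtype.ext (by simp [mul_add]))
    (fun c v w => Subtype.ext (by simp [mul_smul_comm]))

theorem wedge_self (v : H) : wedge (R := R) v v = 0 :=
  Subtype.ext (ι_sq_zero v)

/-- The symplectic form on `H` determined by a basis `e₁, …, e_{2g}`,
with `⟨e_{2i-1}, e_{2i}⟩ = 1 = −⟨e_{2i}, e_{2i-1}⟩`. -/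
noncomputable def sympForm {g : ℕ} (e : Module.Basis (Fin (2 * g)) R H) : H →ₗ[R] H →ₗ[R] R :=
  ∑ i : Fin g,
    ((e.coord ⟨2 * i, by have := i.isLt; omega⟩).smulRight
        (e.coord ⟨2 * i + 1, by have := i.isLt; omega⟩) -
      (e.coord ⟨2 * i + 1, by have := i.isLt; omega⟩).smulRight
        (e.coord ⟨2 * i, by have := i.isLt; omega⟩))

/-- The submodule `N = {f_b : a ↦ a ∧ b | b ∈ H} ⊆ Hom(H, Λ²H)`. -/
noncomputable def nSub (R : Type*) [CommRing R] (H : Type*) [AddCommGroup H] [Module R H] :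
    Submodule R (H →ₗ[R] ↥(⋀[R]^2 H)) :=
  LinearMap.range (LinearMap.flip (wedge (R := R) (H := H)))

section G2

variable [Invertible (2 : R)]

/-- The group `𝒢₂ = Λ²H × H` with multiplication
`(a, v) · (b, w) = (½ v∧w + a + b, v + w)`. -/
noncomputable instance g2Group : Group (↥(⋀[R]^2 H) × H) where
  mul x y := (⅟(2 : R) • wedge (R := R) x.2 y.2 + x.1 + y.1, x.2 + y.2)
  one := (0, 0)
  inv x := (-x.1, -x.2)
  mul_assoc x y z := by
    refine Prod.ext ?_ ?_
    · show ⅟(2 : R) • wedge (R := R) (x.2 + y.2) z.2 +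
          (⅟(2 : R) • wedge (R := R) x.2 y.2 + x.1 + y.1) + z.1 =
        ⅟(2 : R) • wedge (R := R) x.2 (y.2 + z.2) + x.1 +
          (⅟(2 : R) • wedge (R := R) y.2 z.2 + y.1 + z.1)
      simp only [map_add, LinearMap.add_apply, smul_add]
      abel
    · exact add_assoc _ _ _
  one_mul x := by
    have : (⅟(2 : R) • wedge (R := R) (0 : H) x.2 + 0 + x.1, (0 : H) + x.2) = x := by
      simp
    exact this
  mul_one x := by
    have : (⅟(2 : R) • wedge (R := R) x.2 (0 : H) + x.1 + 0, x.2 + (0 : H)) = x := by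
      simp
    exact this
  inv_mul_cancel x := by
    have : (⅟(2 : R) • wedge (R := R) (-x.2) x.2 + -x.1 + x.1, -x.2 + x.2) =
        ((0, 0) : ↥(⋀[R]^2 H) × H) := by
      simp [wedge_self]
    exact this

end G2

theorem map_exteriorPower_le (f : H →ₗ[R] H) (n : ℕ) :
    Submodule.map (ExteriorAlgebra.map f).toLinearMap (⋀[R]^n H) ≤ ⋀[R]^n H := by
  rw [show ((⋀[R]^n H : Submodule R (ExteriorAlgebra R H))) =
      (LinearMap.range (ι R (M := H))) ^ n from rfl, Submodule.map_pow]
  have h1 : Submodule.map (ExteriorAlgebra.map f).toLinearMap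
      (LinearMap.range (ι R (M := H))) ≤ LinearMap.range (ι R (M := H)) := by
    intro x hx
    rw [Submodule.mem_map] at hx
    obtain ⟨y, hy, rfl⟩ := hx
    rw [LinearMap.mem_range] at hy
    obtain ⟨v, rfl⟩ := hy
    exact ⟨f v, (map_apply_ι f v).symm⟩
  induction n with
  | zero => simp
  | succ n ih =>
      rw [pow_succ, pow_succ]
      exact mul_le_mul' ih h1

/-- The endomorphism `Λ²f` of `Λ²H` induced by an endomorphism `f` of `H`. -/
noncomputable def map2 (f : H →ₗ[R] H) : ↥(⋀[R]^2 H) →ₗ[R] ↥(⋀[R]^2 H) :=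
  (ExteriorAlgebra.map f).toLinearMap.restrict (p := ⋀[R]^2 H) (q := ⋀[R]^2 H)
    (fun x hx => map_exteriorPower_le f 2 (Submodule.mem_map_of_mem hx))

/-- The inner automorphisms form a normal subgroup of `Aut(G)`. -/
instance conjRangeNormal {G : Type*} [Group G] : (MulAut.conj (G := G)).range.Normal := by
  constructor
  intro n hn φ
  obtain ⟨g, rfl⟩ := hn
  refine ⟨φ g, ?_⟩
  ext x
  show MulAut.conj (φ g) x = φ (MulAut.conj g (φ⁻¹ x))
  simp only [MulAut.conj_apply, map_mul, map_inv]
  rw [MulAut.apply_inv_self]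

/-- The symplectic group `Sp(H)` of `R`-linear automorphisms preserving the symplectic
form. -/
noncomputable def spSubgroup {g : ℕ} (e : Module.Basis (Fin (2 * g)) R H) : Subgroup (H ≃ₗ[R] H) where
  carrier := {A | ∀ v w : H, sympForm e (A v) (A w) = sympForm e v w}
  one_mem' := by intro v w; rfl
  mul_mem' := by
    intro A B hA hB v w
    have h1 : ∀ x : H, (A * B) x = A (B x) := fun x => rfl
    rw [h1, h1, hA, hB]
  inv_mem' := by
    intro A hA v w
    have h1 : ∀ x : H, A (A⁻¹ x) = x := fun x => A.apply_symm_apply x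
    conv_lhs => rw [← hA (A⁻¹ v) (A⁻¹ w), h1, h1]

/-- Helper instance: quotients of the `R`-module `Hom(H, Λ²H)`. -/
noncomputable instance hqHom :
    HasQuotient (H →ₗ[R] ↥(⋀[R]^2 H)) (Submodule R (H →ₗ[R] ↥(⋀[R]^2 H))) :=
  @Submodule.hasQuotient R (H →ₗ[R] ↥(⋀[R]^2 H)) _ _ _

section MyHelpers

variable {R : Type*} [CommRing R] {H : Type*} [AddCommGroup H] [Module R H]

theorem my_wedge_antisymm (v w : H) : wedge (R := R) v w = - wedge w v := by
  have h := wedge_self (R := R) (v + w)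
  simp only [map_add, LinearMap.add_apply, wedge_self, add_zero, zero_add] at h
  exact eq_neg_of_add_eq_zero_right h

theorem my_map2_coe (f : H →ₗ[R] H) (x : ↥(⋀[R]^2 H)) :
    ((map2 f x : ↥(⋀[R]^2 H)) : ExteriorAlgebra R H) = ExteriorAlgebra.map f x := rfl

theorem my_map2_wedge (f : H →ₗ[R] H) (v w : H) :
    map2 f (wedge (R := R) v w) = wedge (f v) (f w) := by
  refine Subtype.ext ?_
  rw [my_map2_coe]
  show ExteriorAlgebra.map f (ι R v * ι R w) = ι R (f v) * ι R (f w)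
  simp

theorem my_map2_id (x : ↥(⋀[R]^2 H)) : map2 (R := R) LinearMap.id x = x := by
  refine Subtype.ext ?_
  rw [my_map2_coe]
  simp

theorem my_map2_map2 (f g : H →ₗ[R] H) (x : ↥(⋀[R]^2 H)) :
    map2 f (map2 g x) = map2 (f ∘ₗ g) x := by
  refine Subtype.ext ?_
  rw [my_map2_coe, my_map2_coe, my_map2_coe, ← ExteriorAlgebra.map_comp_map]
  rfl

theorem my_mem_nSub {f : H →ₗ[R] ↥(⋀[R]^2 H)} :
    f ∈ nSub R H ↔ ∃ b : H, (wedge (R := R)).flip b = f := Iff.rfl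

theorem my_nSub_conj (E : H ≃ₗ[R] H) {f : H →ₗ[R] ↥(⋀[R]^2 H)} (hf : f ∈ nSub R H) :
    map2 (R := R) (E : H →ₗ[R] H) ∘ₗ f ∘ₗ (E.symm : H →ₗ[R] H) ∈ nSub R H := by
  obtain ⟨b, rfl⟩ := hf
  refine ⟨E b, ?_⟩
  refine LinearMap.ext fun u => ?_
  show wedge (R := R) u (E b) = map2 (E : H →ₗ[R] H) (wedge (E.symm u) b)
  rw [my_map2_wedge]
  simp

theorem my_nSub_conj_iff (E : H ≃ₗ[R] H) (f : H →ₗ[R] ↥(⋀[R]^2 H)) :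
    map2 (R := R) (E : H →ₗ[R] H) ∘ₗ f ∘ₗ (E.symm : H →ₗ[R] H) ∈ nSub R H ↔ f ∈ nSub R H := by
  refine ⟨fun h => ?_, my_nSub_conj E⟩
  have h2 := my_nSub_conj E.symm h
  have : map2 (R := R) (E.symm : H →ₗ[R] H) ∘ₗ
      (map2 (R := R) (E : H →ₗ[R] H) ∘ₗ f ∘ₗ (E.symm : H →ₗ[R] H)) ∘ₗ
      (E.symm.symm : H →ₗ[R] H) = f := by
    refine LinearMap.ext fun u => ?_
    show map2 (R := R) (E.symm : H →ₗ[R] H)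
      (map2 (E : H →ₗ[R] H) (f (E.symm (E.symm.symm u)))) = f u
    rw [my_map2_map2]
    simp only [LinearEquiv.symm_symm, LinearEquiv.symm_apply_apply]
    have : ((E.symm : H →ₗ[R] H) ∘ₗ (E : H →ₗ[R] H)) = LinearMap.id := by
      ext v; simp
    rw [this, my_map2_id]
  rwa [this] at h2

section Inv2

variable [Invertible (2 : R)]

theorem my_conj_apply (b ξ : ↥(⋀[R]^2 H)) (w u : H) :
    MulAut.conj (G := ↥(⋀[R]^2 H) × H) (b, w) (ξ, u) = (wedge (R := R) w u + ξ, u) := by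
  show (b, w) * (ξ, u) * ((b, w)⁻¹ : ↥(⋀[R]^2 H) × H) = _
  have hinv : ((b, w)⁻¹ : ↥(⋀[R]^2 H) × H) = (-b, -w) := rfl
  rw [hinv]
  refine Prod.ext ?_ ?_
  · show ⅟(2 : R) • wedge (R := R) (w + u) (-w) +
        (⅟(2 : R) • wedge (R := R) w u + b + ξ) + (-b) = wedge (R := R) w u + ξ
    have h1 : wedge (R := R) (w + u) (-w) = wedge (R := R) w u := by
      rw [map_neg, map_add]
      simp only [LinearMap.add_apply, LinearMap.neg_apply, wedge_self]
      rw [my_wedge_antisymm u w]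
      abel
    rw [h1]
    have h2 : ⅟(2 : R) • wedge (R := R) w u + ⅟(2 : R) • wedge (R := R) w u =
        wedge (R := R) w u := by
      rw [← add_smul, ← two_mul, mul_invOf_self, one_smul]
    calc ⅟(2 : R) • wedge (R := R) w u + (⅟(2 : R) • wedge (R := R) w u + b + ξ) + -b
        = (⅟(2 : R) • wedge (R := R) w u + ⅟(2 : R) • wedge (R := R) w u) + ξ := by abel
      _ = wedge (R := R) w u + ξ := by rw [h2]
  · show (w + u) + (-w) = u
    abel

end Inv2

end MyHelpers

set_option maxHeartbeats 1000000 in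
/-- Under the isomorphism `Aut(𝒢₂) ≅ Hom(H, Λ²H) ⋊ GL(H)` of Statement 8,
the inner automorphism group `Inn(𝒢₂)` corresponds to `N × {id}`, where
`N = {f_b : a ↦ a ∧ b | b ∈ H}`; and `SpOut(𝒢₂)`, the image in `Out(𝒢₂) = Aut(𝒢₂)/Inn(𝒢₂)`
of the preimage of `Sp(H)`, is isomorphic to the semidirect product
`(Hom(H, Λ²H)/N) ⋊ Sp(H)` (with the induced action). -/
theorem stmt9 (P : Ideal ℤ) [P.IsPrime] (hP2 : (2 : ℤ) ∉ P) (hP3 : (3 : ℤ) ∉ P)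
    {R : Type*} [CommRing R] [Algebra ℤ R] [IsLocalization.AtPrime R P] [Invertible (2 : R)]
    {H : Type*} [AddCommGroup H] [Module R H] {g : ℕ} (hg : 1 ≤ g)
    (e : Module.Basis (Fin (2 * g)) R H)
    -- the isomorphism of Statement 8:
    (Θ : ((H →ₗ[R] ↥(⋀[R]^2 H)) × (H ≃ₗ[R] H)) ≃ MulAut (↥(⋀[R]^2 H) × H))
    (hΘ1 : ∀ (f : H →ₗ[R] ↥(⋀[R]^2 H)) (A : H ≃ₗ[R] H) (ξ : ↥(⋀[R]^2 H)) (u : H),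
      Θ (f, A) (ξ, u) = ((2 : R) • f (A u) + map2 (R := R) (A : H →ₗ[R] H) ξ, A u))
    (hΘ2 : ∀ (f f' : H →ₗ[R] ↥(⋀[R]^2 H)) (A A' : H ≃ₗ[R] H),
      Θ (f' + map2 (R := R) (A' : H →ₗ[R] H) ∘ₗ f ∘ₗ (A'.symm : H →ₗ[R] H), A' * A) =
        Θ (f', A') * Θ (f, A)) :
    -- (a) `Inn(𝒢₂)` corresponds to `N × {id_H}`:
    (∀ (f : H →ₗ[R] ↥(⋀[R]^2 H)) (A : H ≃ₗ[R] H),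
      Θ (f, A) ∈ (MulAut.conj (G := ↥(⋀[R]^2 H) × H)).range ↔
        (f ∈ nSub R H ∧ A = 1)) ∧
    -- (b) `SpOut(𝒢₂) ≅ (Hom(H, Λ²H)/N) ⋊ Sp(H)`:
    (∀ ρ : (H ≃ₗ[R] H) →
        ((H →ₗ[R] ↥(⋀[R]^2 H)) ⧸ nSub R H) →
        ((H →ₗ[R] ↥(⋀[R]^2 H)) ⧸ nSub R H),
      (∀ (A : H ≃ₗ[R] H) (f : H →ₗ[R] ↥(⋀[R]^2 H)),
        ρ A (Submodule.Quotient.mk f) =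
          Submodule.Quotient.mk (map2 (R := R) (A : H →ₗ[R] H) ∘ₗ f ∘ₗ (A.symm : H →ₗ[R] H))) →
      ∃ Ψ : ↥(Subgroup.closure
          {c : MulAut (↥(⋀[R]^2 H) × H) ⧸ (MulAut.conj (G := ↥(⋀[R]^2 H) × H)).range |
            ∃ (f : H →ₗ[R] ↥(⋀[R]^2 H)) (A : H ≃ₗ[R] H),
              A ∈ spSubgroup e ∧ c = QuotientGroup.mk (Θ (f, A))}) ≃
          (((H →ₗ[R] ↥(⋀[R]^2 H)) ⧸ nSub R H) ×
            ↥(spSubgroup e)),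
        ∀ x y, Ψ (x * y) =
          ((Ψ x).1 + ρ ((Ψ x).2 : H ≃ₗ[R] H) (Ψ y).1, (Ψ x).2 * (Ψ y).2)) := by
  classical
  -- Θ(0,1) is the identity automorphism
  have hcoe1 : ((1 : H ≃ₗ[R] H) : H →ₗ[R] H) = LinearMap.id := rfl
  have hone : Θ (0, 1) = 1 := by
    refine MulEquiv.ext fun x => ?_
    obtain ⟨ξ, u⟩ := x
    rw [hΘ1]
    show ((2 : R) • (0 : ↥(⋀[R]^2 H)) + map2 (R := R) ((1 : H ≃ₗ[R] H) : H →ₗ[R] H) ξ,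
      (1 : H ≃ₗ[R] H) u) = (ξ, u)
    rw [hcoe1, my_map2_id]
    simp
  -- part (a)
  have parta : ∀ (f : H →ₗ[R] ↥(⋀[R]^2 H)) (A : H ≃ₗ[R] H),
      Θ (f, A) ∈ (MulAut.conj (G := ↥(⋀[R]^2 H) × H)).range ↔ (f ∈ nSub R H ∧ A = 1) := by
    intro f A
    constructor
    · rintro ⟨⟨b, w⟩, h⟩
      have happ : ∀ (ξ : ↥(⋀[R]^2 H)) (u : H),
          (wedge (R := R) w u + ξ, u) =
            ((2 : R) • f (A u) + map2 (R := R) (A : H →ₗ[R] H) ξ, A u) := by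
        intro ξ u
        rw [← my_conj_apply, ← hΘ1, h]
      have hA : A = 1 := by
        refine LinearEquiv.ext fun u => ?_
        have := congrArg Prod.snd (happ 0 u)
        exact this.symm
      subst hA
      have hf : ∀ u : H, (2 : R) • f u = wedge (R := R) w u := by
        intro u
        have := congrArg Prod.fst (happ 0 u)
        rw [map_zero] at this
        simp only [add_zero] at this
        have h1 : (1 : H ≃ₗ[R] H) u = u := rfl
        rw [h1] at this
        exact this.symm
      refine ⟨⟨-(⅟(2 : R) • w), ?_⟩, rfl⟩
      refine LinearMap.ext fun u => ?_
      show wedge (R := R) u (-(⅟(2 : R) • w)) = f u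
      rw [map_neg, map_smul, my_wedge_antisymm u w]
      rw [smul_neg, neg_neg]
      rw [show wedge (R := R) w u = (2 : R) • f u from (hf u).symm]
      rw [smul_smul, invOf_mul_self, one_smul]
    · rintro ⟨⟨b, rfl⟩, rfl⟩
      refine ⟨((0 : ↥(⋀[R]^2 H)), -((2 : R) • b)), ?_⟩
      refine MulEquiv.ext fun x => ?_
      obtain ⟨ξ, u⟩ := x
      rw [my_conj_apply, hΘ1]
      have h1 : (1 : H ≃ₗ[R] H) u = u := rfl
      rw [h1, hcoe1, my_map2_id]
      refine Prod.ext ?_ rfl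
      show wedge (R := R) (-((2 : R) • b)) u + ξ =
        (2 : R) • (wedge (R := R)).flip b u + ξ
      congr 1
      show wedge (R := R) (-((2 : R) • b)) u = (2 : R) • wedge (R := R) u b
      rw [map_neg, map_smul, LinearMap.neg_apply, LinearMap.smul_apply,
        my_wedge_antisymm b u, smul_neg, neg_neg]
  -- inverse formula
  have hinvdef : ∀ A : H ≃ₗ[R] H, A⁻¹ = A.symm := fun _ => rfl
  have hinvΘ : ∀ (f : H →ₗ[R] ↥(⋀[R]^2 H)) (A : H ≃ₗ[R] H),
      (Θ (f, A))⁻¹ =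
        Θ (-(map2 (R := R) ((A⁻¹ : H ≃ₗ[R] H) : H →ₗ[R] H) ∘ₗ f ∘ₗ
            ((A⁻¹ : H ≃ₗ[R] H).symm : H →ₗ[R] H)), A⁻¹) := by
    intro f A
    refine inv_eq_of_mul_eq_one_left ?_
    rw [← hΘ2 f _ A A⁻¹, ← hone]
    congr 1
    refine Prod.ext ?_ ?_
    · exact neg_add_cancel (map2 (R := R) ((A⁻¹ : H ≃ₗ[R] H) : H →ₗ[R] H) ∘ₗ f ∘ₗ
        ((A⁻¹ : H ≃ₗ[R] H).symm : H →ₗ[R] H))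
    · exact inv_mul_cancel A
  -- key lemma: equality of cosets
  have key : ∀ (f f' : H →ₗ[R] ↥(⋀[R]^2 H)) (A A' : H ≃ₗ[R] H),
      (QuotientGroup.mk (Θ (f, A)) :
          MulAut (↥(⋀[R]^2 H) × H) ⧸ (MulAut.conj (G := ↥(⋀[R]^2 H) × H)).range) =
        QuotientGroup.mk (Θ (f', A')) ↔
      (A = A' ∧ (Submodule.Quotient.mk f : _ ⧸ nSub R H) = Submodule.Quotient.mk f') := by
    intro f f' A A'
    rw [QuotientGroup.eq]
    have hprod : (Θ (f, A))⁻¹ * Θ (f', A') =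
        Θ (map2 (R := R) ((A.symm : H ≃ₗ[R] H) : H →ₗ[R] H) ∘ₗ (f' - f) ∘ₗ
            ((A.symm.symm : H ≃ₗ[R] H) : H →ₗ[R] H), A⁻¹ * A') := by
      rw [hinvΘ, ← hΘ2 f' _ A' A⁻¹]
      congr 2
      refine LinearMap.ext fun u => ?_
      rw [hinvdef]
      show -(map2 (R := R) (A.symm : H →ₗ[R] H) (f (A.symm.symm u))) +
          map2 (R := R) (A.symm : H →ₗ[R] H) (f' (A.symm.symm u)) =
        map2 (R := R) (A.symm : H →ₗ[R] H) ((f' - f) (A.symm.symm u))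
      rw [LinearMap.sub_apply, map_sub]
      abel
    rw [hprod, parta]
    constructor
    · rintro ⟨hN, hA1⟩
      rw [inv_mul_eq_one] at hA1
      refine ⟨hA1, ?_⟩
      rw [Submodule.Quotient.eq]
      have := (my_nSub_conj_iff (A.symm) (f' - f)).mp hN
      have h2 : f - f' = -(f' - f) := by abel
      rw [h2, ← neg_one_smul R (f' - f)]
      exact Submodule.smul_mem _ _ this
    · rintro ⟨rfl, hq⟩
      rw [Submodule.Quotient.eq] at hq
      refine ⟨?_, inv_mul_cancel A⟩
      refine (my_nSub_conj_iff (A.symm) (f' - f)).mpr ?_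
      have h2 : f' - f = -(f - f') := by abel
      rw [h2, ← neg_one_smul R (f - f')]
      exact Submodule.smul_mem _ _ hq
  refine ⟨parta, ?_⟩
  intro ρ hρ
  set S₀ : Set (MulAut (↥(⋀[R]^2 H) × H) ⧸ (MulAut.conj (G := ↥(⋀[R]^2 H) × H)).range) :=
    {c | ∃ (f : H →ₗ[R] ↥(⋀[R]^2 H)) (A : H ≃ₗ[R] H),
      A ∈ spSubgroup e ∧ c = QuotientGroup.mk (Θ (f, A))} with hS₀def
  have hS₀ : ∀ x ∈ Subgroup.closure S₀, x ∈ S₀ := by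
    intro x hx
    refine Subgroup.closure_induction (fun y hy => hy) ?_ ?_ ?_ hx
    · exact ⟨0, 1, one_mem _, by rw [hone]; rfl⟩
    · rintro _ _ _ _ ⟨f, A, hA, rfl⟩ ⟨f', A', hA', rfl⟩
      exact ⟨f + map2 (R := R) (A : H →ₗ[R] H) ∘ₗ f' ∘ₗ (A.symm : H →ₗ[R] H), A * A',
        mul_mem hA hA', by rw [← QuotientGroup.mk_mul, ← hΘ2 f' f A' A]⟩
    · rintro _ _ ⟨f, A, hA, rfl⟩
      exact ⟨-(map2 (R := R) ((A⁻¹ : H ≃ₗ[R] H) : H →ₗ[R] H) ∘ₗ f ∘ₗ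
          ((A⁻¹ : H ≃ₗ[R] H).symm : H →ₗ[R] H)), A⁻¹, inv_mem hA,
        by rw [← QuotientGroup.mk_inv, hinvΘ]⟩
  choose F Afun hAmem hxeq using fun (x : ↥(Subgroup.closure S₀)) => hS₀ x.1 x.2
  set Ψ₀ : ↥(Subgroup.closure S₀) →
      (((H →ₗ[R] ↥(⋀[R]^2 H)) ⧸ nSub R H) × ↥(spSubgroup e)) :=
    fun x => (Submodule.Quotient.mk (F x), ⟨Afun x, hAmem x⟩) with hΨ₀def
  have hΨkey : ∀ (x : ↥(Subgroup.closure S₀)) (f : H →ₗ[R] ↥(⋀[R]^2 H)) (A : H ≃ₗ[R] H)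
      (hA : A ∈ spSubgroup e), (x : MulAut (↥(⋀[R]^2 H) × H) ⧸ (MulAut.conj (G := ↥(⋀[R]^2 H) × H)).range) = QuotientGroup.mk (Θ (f, A)) →
      Ψ₀ x = (Submodule.Quotient.mk f, ⟨A, hA⟩) := by
    intro x f A hA hx
    have h1 : (QuotientGroup.mk (Θ (F x, Afun x)) : MulAut (↥(⋀[R]^2 H) × H) ⧸ (MulAut.conj (G := ↥(⋀[R]^2 H) × H)).range) = QuotientGroup.mk (Θ (f, A)) := by
      rw [← hxeq x, hx]
    obtain ⟨h2, h3⟩ := (key _ _ _ _).mp h1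
    refine Prod.ext h3 (Subtype.ext h2)
  have hinj : Function.Injective Ψ₀ := by
    intro x y h
    have h1 : Afun x = Afun y := congrArg (fun p => (p.2 : H ≃ₗ[R] H)) h
    have h2 : (Submodule.Quotient.mk (F x) : _ ⧸ nSub R H) = Submodule.Quotient.mk (F y) :=
      congrArg Prod.fst h
    have h3 := (key (F x) (F y) (Afun x) (Afun y)).mpr ⟨h1, h2⟩
    refine Subtype.ext ?_
    rw [hxeq x, hxeq y, h3]
  have hsurj : Function.Surjective Ψ₀ := by
    rintro ⟨q, A, hA⟩
    obtain ⟨f, rfl⟩ := Submodule.Quotient.mk_surjective _ q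
    refine ⟨⟨(QuotientGroup.mk (Θ (f, A)) : MulAut (↥(⋀[R]^2 H) × H) ⧸
        (MulAut.conj (G := ↥(⋀[R]^2 H) × H)).range),
      Subgroup.subset_closure ⟨f, A, hA, rfl⟩⟩, hΨkey _ f A hA rfl⟩
  refine ⟨Equiv.ofBijective Ψ₀ ⟨hinj, hsurj⟩, ?_⟩
  intro x y
  show Ψ₀ (x * y) = ((Ψ₀ x).1 + ρ ((Ψ₀ x).2 : H ≃ₗ[R] H) (Ψ₀ y).1, (Ψ₀ x).2 * (Ψ₀ y).2)
  have hxy : ((x * y : ↥(Subgroup.closure S₀)) : MulAut (↥(⋀[R]^2 H) × H) ⧸ (MulAut.conj (G := ↥(⋀[R]^2 H) × H)).range) =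
      QuotientGroup.mk (Θ (F x + map2 (R := R) ((Afun x : H ≃ₗ[R] H) : H →ₗ[R] H) ∘ₗ F y ∘ₗ
        ((Afun x).symm : H →ₗ[R] H), Afun x * Afun y)) := by
    rw [hΘ2 (F y) (F x) (Afun y) (Afun x)]
    rw [QuotientGroup.mk_mul, ← hxeq x, ← hxeq y]
    rfl
  rw [hΨkey (x * y) _ _ (mul_mem (hAmem x) (hAmem y)) hxy]
  refine Prod.ext ?_ (Subtype.ext rfl)
  show Submodule.Quotient.mk (F x + _) = _
  rw [Submodule.Quotient.mk_add, hρ]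


end Paper
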